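/- Let π be a permutation of {1, …, n} and let 0 ≤ m ≤ n be such that π(1) < π(2) < … < π(m). Then the total number of inversions of π satisfies inv(π) = Σ_{j = m+1}^{n} ( j − π(j) + |{ i : i > j and π(i) < π(j) }| ). -/
import Mathlib
open Finset

lemma pointwise (n : ℕ) (π : Equiv.Perm (Fin n)) (j : Fin n) :
    ((univ.filter fun i : Fin n => i < j ∧ π j < π i).card : ℤ) =
      (j : ℤ) - ((π j : ℕ) : ℤ) +
        ((univ.filter fun i : Fin n => j < i ∧ π i < π j).card : ℤ) := by
  set A := univ.filter fun i : Fin n => i < j ∧ π i < π j with hA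
  set B := univ.filter fun i : Fin n => i < j ∧ π j < π i with hB
  set C := univ.filter fun i : Fin n => j < i ∧ π i < π j with hC
  have h1 : A.card + B.card = (j : ℕ) := by
    rw [← card_union_of_disjoint (by
      rw [disjoint_left]; intro i hi hi'
      simp only [hA, hB, mem_filter] at hi hi'
      exact absurd (hi.2.2.trans hi'.2.2) (lt_irrefl _))]
    rw [show A ∪ B = univ.filter (fun i => i < j) by
      ext i
      simp only [hA, hB, mem_union, mem_filter, mem_univ, true_and]
      constructor
      · rintro (⟨h, _⟩ | ⟨h, _⟩) <;> exact h
      · intro h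
        rcases lt_or_gt_of_ne (fun e : π i = π j => absurd (π.injective e ▸ h) (lt_irrefl _)) with
          h' | h'
        · exact Or.inl ⟨h, h'⟩
        · exact Or.inr ⟨h, h'⟩]
    rw [Finset.filter_gt_eq_Iio, Fin.card_Iio]
  have h2 : A.card + C.card = (π j : ℕ) := by
    rw [← card_union_of_disjoint (by
      rw [disjoint_left]; intro i hi hi'
      simp only [hA, hC, mem_filter] at hi hi'
      exact absurd (hi.2.1.trans hi'.2.1) (lt_irrefl _))]
    rw [show A ∪ C = univ.filter (fun i => π i < π j) by
      ext i
      simp only [hA, hC, mem_union, mem_filter, mem_univ, true_and]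
      constructor
      · rintro (⟨_, h⟩ | ⟨_, h⟩) <;> exact h
      · intro h
        rcases lt_or_gt_of_ne (fun e : i = j => absurd (e ▸ h) (lt_irrefl _)) with h' | h'
        · exact Or.inl ⟨h', h⟩
        · exact Or.inr ⟨h', h⟩]
    rw [show (univ.filter (fun i => π i < π j)) = (Iio (π j)).map π.symm.toEmbedding by
      ext i; simp [Equiv.symm_apply_eq, eq_comm]]
    rw [card_map, Fin.card_Iio]
  have h1' : (A.card : ℤ) + B.card = ((j : ℕ) : ℤ) := by exact_mod_cast h1
  have h2' : (A.card : ℤ) + C.card = ((π j : ℕ) : ℤ) := by exact_mod_cast h2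
  linarith

theorem inversions_eq_sum (n : ℕ) (π : Equiv.Perm (Fin n)) (m : ℕ) (hm : m ≤ n)
    (hmono : ∀ i j : Fin n, (i : ℕ) < m → (j : ℕ) < m → i < j → π i < π j) :
    ((Finset.univ.filter fun p : Fin n × Fin n => p.1 < p.2 ∧ π p.2 < π p.1).card : ℤ) =
      ∑ j ∈ Finset.univ.filter (fun j : Fin n => m ≤ (j : ℕ)),
        ((j : ℤ) - ((π j : ℕ) : ℤ) +
          ((Finset.univ.filter fun i : Fin n => j < i ∧ π i < π j).card : ℤ)) := by
  classical
  have hfib : (Finset.univ.filter fun p : Fin n × Fin n => p.1 < p.2 ∧ π p.2 < π p.1).card =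
      ∑ j : Fin n, (univ.filter fun i : Fin n => i < j ∧ π j < π i).card := by
    rw [Finset.card_eq_sum_card_fiberwise
      (f := fun p : Fin n × Fin n => p.2) (t := Finset.univ) (fun p _ => mem_univ _)]
    refine Finset.sum_congr rfl fun j _ => ?_
    refine Finset.card_bij' (fun p _ => p.1) (fun i _ => (i, j)) ?_ ?_ ?_ ?_
    · intro p hp
      simp only [mem_filter, mem_univ, true_and] at hp ⊢
      obtain ⟨⟨h1, h2⟩, h3⟩ := hp
      subst h3; exact ⟨h1, h2⟩
    · intro i hi
      simp only [mem_filter, mem_univ, true_and] at hi ⊢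
      exact ⟨⟨hi.1, hi.2⟩, trivial⟩
    · intro p hp
      simp only [mem_filter] at hp
      exact Prod.ext rfl hp.2.symm
    · intro i _; rfl
  rw [hfib]
  push_cast
  rw [← Finset.sum_filter_add_sum_filter_not univ (fun j : Fin n => m ≤ (j : ℕ))]
  have hzero : ∑ j ∈ univ.filter (fun j : Fin n => ¬ m ≤ (j : ℕ)),
      ((univ.filter fun i : Fin n => i < j ∧ π j < π i).card : ℤ) = 0 := by
    refine Finset.sum_eq_zero fun j hj => ?_
    simp only [mem_filter, not_le] at hj
    rw [Finset.filter_false_of_mem, Finset.card_empty, Nat.cast_zero]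
    rintro i _ ⟨h1, h2⟩
    exact absurd (hmono i j (lt_trans (show (i:ℕ) < (j:ℕ) from h1) hj.2) hj.2 h1) (not_lt.2 h2.le)
  rw [hzero, add_zero]
  exact Finset.sum_congr rfl fun j _ => pointwise n π j
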